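/- Let n ≥ 1, let B and C be finite sets with A = B ∩ C, and let R_B and R_C be equivalence relations on B and C respectively, each with at most n equivalence classes, such that R_B and R_C agree on A (for all a, a′ ∈ A, R_B(a,a′) iff R_C(a,a′)). Then there exists an equivalence relation R on B ∪ C with at most n equivalence classes such that R restricted to B equals R_B and R restricted to C equals R_C. -/
import Mathlib



open Function in
lemma extend_inj_aux {γ : Type*} [Fintype γ] {m : ℕ} (s : Set γ) (f : s → Fin m)
    (hf : Function.Injective f) (hcard : Fintype.card γ ≤ m) :
    ∃ F : γ → Fin m, Function.Injective F ∧ ∀ x : s, F x = f x := by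
  classical
  have h1 : Fintype.card {x // x ∉ s} = Fintype.card γ - Fintype.card s :=
    Fintype.card_subtype_compl _
  have h2 : Fintype.card {y : Fin m // y ∉ Set.range f} = m - Fintype.card s := by
    rw [Fintype.card_subtype_compl]
    congr 1
    · exact Fintype.card_fin m
    · exact (Set.card_range_of_injective hf).trans rfl
  have hle : Fintype.card {x // x ∉ s} ≤ Fintype.card {y : Fin m // y ∉ Set.range f} := by
    rw [h1, h2]; omega
  obtain ⟨j⟩ := Function.Embedding.nonempty_of_card_le hle
  refine ⟨fun x => if h : x ∈ s then f ⟨x, h⟩ else (j ⟨x, h⟩ : Fin m), ?_, ?_⟩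
  · intro x y hxy
    by_cases hx : x ∈ s <;> by_cases hy : y ∈ s <;> simp [hx, hy] at hxy
    · exact congrArg Subtype.val (hf hxy)
    · exact absurd ⟨⟨x, hx⟩, hxy⟩ (j ⟨y, hy⟩).2
    · exact absurd ⟨⟨y, hy⟩, hxy.symm⟩ (j ⟨x, hx⟩).2
    · simpa using congrArg Subtype.val (j.injective (Subtype.ext hxy))
  · intro x; simp

/-- Disjoint amalgamation for equivalence relations with at most `n` classes:
two equivalence relations on `B` and `C` agreeing on `B ∩ C`, each with at most
`n` classes, extend to a common equivalence relation on `B ∪ C` with at most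
`n` classes. -/
theorem amalgamate_bounded_equiv_rels {α : Type*} [DecidableEq α] (n : ℕ)
    (hn : 1 ≤ n) (B C : Finset α)
    (SB : Setoid {x // x ∈ B}) (SC : Setoid {x // x ∈ C})
    (hB : Nat.card (Quotient SB) ≤ n) (hC : Nat.card (Quotient SC) ≤ n)
    (hagree : ∀ (a a' : α) (haB : a ∈ B) (haC : a ∈ C) (ha'B : a' ∈ B)
      (ha'C : a' ∈ C), SB.r ⟨a, haB⟩ ⟨a', ha'B⟩ ↔ SC.r ⟨a, haC⟩ ⟨a', ha'C⟩) :
    ∃ S : Setoid {x // x ∈ B ∪ C}, Nat.card (Quotient S) ≤ n ∧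
      (∀ (a a' : α) (ha : a ∈ B) (ha' : a' ∈ B),
        S.r ⟨a, Finset.mem_union_left _ ha⟩ ⟨a', Finset.mem_union_left _ ha'⟩ ↔
          SB.r ⟨a, ha⟩ ⟨a', ha'⟩) ∧
      (∀ (a a' : α) (ha : a ∈ C) (ha' : a' ∈ C),
        S.r ⟨a, Finset.mem_union_right _ ha⟩ ⟨a', Finset.mem_union_right _ ha'⟩ ↔
          SC.r ⟨a, ha⟩ ⟨a', ha'⟩) := by 
  classical
  haveI : Fintype (Quotient SB) := Fintype.ofFinite _
  haveI : Fintype (Quotient SC) := Fintype.ofFinite _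
  obtain ⟨eB⟩ : Nonempty (Quotient SB ↪ Fin n) := by
    apply Function.Embedding.nonempty_of_card_le
    rwa [Fintype.card_fin, ← Nat.card_eq_fintype_card]
  set s : Set (Quotient SC) :=
    {q | ∃ x : {x // x ∈ C}, (x : α) ∈ B ∧ Quotient.mk SC x = q} with hs
  have hwit : ∀ q : s, ∃ x : {x // x ∈ C}, (x : α) ∈ B ∧ Quotient.mk SC x = q :=
    fun q => q.2
  choose w hwB hwq using hwit
  set f : s → Fin n := fun q => eB (Quotient.mk SB ⟨w q, hwB q⟩) with hf
  -- key: value of f on any representative in B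
  have key : ∀ (q : s) (x : {x // x ∈ C}) (hxB : (x : α) ∈ B),
      Quotient.mk SC x = (q : Quotient SC) → f q = eB (Quotient.mk SB ⟨x, hxB⟩) := by
    intro q x hxB hq
    have hrC : SC.r (w q) x := Quotient.exact ((hwq q).trans hq.symm)
    have hrB : SB.r ⟨w q, hwB q⟩ ⟨x, hxB⟩ := by
      have := (hagree (w q) x (hwB q) (w q).2 hxB x.2).mpr
      exact this hrC
    simp only [hf]
    exact congrArg eB (Quotient.sound hrB)
  have hfinj : Function.Injective f := by
    intro q q' h
    have h2 : Quotient.mk SB ⟨w q, hwB q⟩ = Quotient.mk SB ⟨w q', hwB q'⟩ :=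
      eB.injective h
    have hrB := Quotient.exact h2
    have hrC : SC.r (w q) (w q') :=
      (hagree (w q) (w q') (hwB q) (w q).2 (hwB q') (w q').2).mp hrB
    exact Subtype.ext ((hwq q).symm.trans ((Quotient.sound hrC).trans (hwq q')))
  obtain ⟨F, hFinj, hFf⟩ := extend_inj_aux s f hfinj
    (by rwa [← Nat.card_eq_fintype_card])
  -- labels
  set LB : {x // x ∈ B} → Fin n := fun x => eB (Quotient.mk SB x) with hLB
  set LC : {x // x ∈ C} → Fin n := fun x => F (Quotient.mk SC x) with hLC
  have hBC : ∀ (a : α) (haB : a ∈ B) (haC : a ∈ C), LB ⟨a, haB⟩ = LC ⟨a, haC⟩ := by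
    intro a haB haC
    have hmem : Quotient.mk SC ⟨a, haC⟩ ∈ s := ⟨⟨a, haC⟩, haB, rfl⟩
    have := hFf ⟨Quotient.mk SC ⟨a, haC⟩, hmem⟩
    have hk := key ⟨Quotient.mk SC ⟨a, haC⟩, hmem⟩ ⟨a, haC⟩ haB rfl
    simp only [hLB, hLC]
    rw [this, hk]
  set L : {x // x ∈ B ∪ C} → Fin n := fun x =>
    if h : (x : α) ∈ B then LB ⟨x, h⟩
    else LC ⟨x, (Finset.mem_union.mp x.2).resolve_left h⟩ with hL
  have hLonB : ∀ (a : α) (haB : a ∈ B),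
      L ⟨a, Finset.mem_union_left _ haB⟩ = LB ⟨a, haB⟩ := by
    intro a haB; simp [hL, haB]
  have hLonC : ∀ (a : α) (haC : a ∈ C),
      L ⟨a, Finset.mem_union_right _ haC⟩ = LC ⟨a, haC⟩ := by
    intro a haC
    by_cases haB : a ∈ B
    · simp [hL, haB, hBC a haB haC]
    · simp [hL, haB]
  refine ⟨Setoid.ker L, ?_, ?_, ?_⟩
  · have : Function.Injective (Quotient.lift L fun a b (h : Setoid.ker L a b) => h) := by
      rintro ⟨a⟩ ⟨b⟩ h
      exact Quotient.sound h
    calc Nat.card (Quotient (Setoid.ker L)) ≤ Nat.card (Fin n) :=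
          Nat.card_le_card_of_injective _ this
      _ = n := by simp
  · intro a a' ha ha'
    show L _ = L _ ↔ _
    rw [hLonB a ha, hLonB a' ha']
    constructor
    · intro h; exact Quotient.exact (eB.injective h)
    · intro h; exact congrArg eB (Quotient.sound h)
  · intro a a' ha ha'
    show L _ = L _ ↔ _
    rw [hLonC a ha, hLonC a' ha']
    constructor
    · intro h; exact Quotient.exact (hFinj h)
    · intro h; exact congrArg F (Quotient.sound h)
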